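/- Let φ be a Bernstein function with q = φ(0) > 0 or more generally with φ(Re z) > 0. Then for all z with Re(z) > 0, |φ(Re(z))| ≤ |φ(z)|, i.e. the modulus of φ along a vertical line is minimized on the real axis. -/

import Mathlib

open MeasureTheory Set Filter

theorem bernstein_abs_real_le_abs
    (q d : ℝ) (hq : 0 ≤ q) (hd : 0 ≤ d)
    (μ : Measure ℝ)
    (hμ : ∫⁻ y in Set.Ioi (0:ℝ), ENNReal.ofReal (min y 1) ∂μ < ⊤)
    (φ : ℂ → ℂ)
    (hφ : ∀ z : ℂ, 0 < z.re →
      φ z = (q : ℂ) + (d : ℂ) * z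
        + ∫ y in Set.Ioi (0:ℝ), (1 - Complex.exp (-(z * (y : ℂ)))) ∂μ)
    (hint : ∀ z : ℂ, 0 < z.re →
      IntegrableOn (fun y : ℝ => 1 - Complex.exp (-(z * (y : ℂ)))) (Set.Ioi 0) μ)
    (hpos : ∀ x : ℝ, 0 < x → 0 < (φ (x : ℂ)).re) :
    ∀ z : ℂ, 0 < z.re → ‖φ ((z.re : ℂ))‖ ≤ ‖φ z‖ := by
  intro z hz
  set x : ℝ := z.re with hxdef
  have hxre : ((x : ℂ)).re = x := Complex.ofReal_re x
  have hx : 0 < x := hz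
  have hx' : 0 < ((x : ℂ)).re := by rwa [hxre]
  -- integrability of real parts
  have hintz := hint z hz
  have hintx := hint (x : ℂ) hx'
  have hIz : IntegrableOn (fun y : ℝ => (1 - Complex.exp (-(z * (y : ℂ)))).re)
      (Set.Ioi 0) μ := hintz.re
  have hIx : IntegrableOn (fun y : ℝ => (1 - Complex.exp (-((x : ℂ) * (y : ℂ)))).re)
      (Set.Ioi 0) μ := hintx.re
  -- pointwise inequality of real parts of integrands
  have hpt : ∀ y : ℝ, (1 - Complex.exp (-((x : ℂ) * (y : ℂ)))).re
      ≤ (1 - Complex.exp (-(z * (y : ℂ)))).re := by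
    intro y
    have h1 : (Complex.exp (-(z * (y : ℂ)))).re ≤ Real.exp (-(x * y)) := by
      calc (Complex.exp (-(z * (y : ℂ)))).re
          ≤ ‖Complex.exp (-(z * (y : ℂ)))‖ := Complex.re_le_norm _
        _ = Real.exp ((-(z * (y : ℂ))).re) := Complex.norm_exp _
        _ = Real.exp (-(x * y)) := by
            congr 1
            simp [Complex.mul_re, hxdef]
    have h2 : (Complex.exp (-((x : ℂ) * (y : ℂ)))).re = Real.exp (-(x * y)) := by
      rw [show -((x : ℂ) * (y : ℂ)) = ((-(x * y) : ℝ) : ℂ) by push_cast; ring,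
        Complex.exp_ofReal_re]
    simp only [Complex.sub_re, Complex.one_re]
    rw [h2]
    linarith
  -- integral inequality
  have hle : ∫ y in Set.Ioi (0:ℝ), (1 - Complex.exp (-((x : ℂ) * (y : ℂ)))).re ∂μ
      ≤ ∫ y in Set.Ioi (0:ℝ), (1 - Complex.exp (-(z * (y : ℂ)))).re ∂μ :=
    integral_mono hIx hIz (fun y => hpt y)
  have hrez : ∫ y in Set.Ioi (0:ℝ), (1 - Complex.exp (-(z * (y : ℂ)))).re ∂μ
      = (∫ y in Set.Ioi (0:ℝ), (1 - Complex.exp (-(z * (y : ℂ)))) ∂μ).re :=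
    integral_re hintz
  have hrex : ∫ y in Set.Ioi (0:ℝ), (1 - Complex.exp (-((x : ℂ) * (y : ℂ)))).re ∂μ
      = (∫ y in Set.Ioi (0:ℝ), (1 - Complex.exp (-((x : ℂ) * (y : ℂ)))) ∂μ).re :=
    integral_re hintx
  -- φ(x) has zero imaginary part
  have him0 : (φ ((x : ℂ))).im = 0 := by
    rw [hφ (x : ℂ) hx']
    have : ∫ y in Set.Ioi (0:ℝ), (1 - Complex.exp (-((x : ℂ) * (y : ℂ)))).im ∂μ
        = (∫ y in Set.Ioi (0:ℝ), (1 - Complex.exp (-((x : ℂ) * (y : ℂ)))) ∂μ).im :=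
      integral_im hintx
    have hz0 : ∀ y : ℝ, (1 - Complex.exp (-((x : ℂ) * (y : ℂ)))).im = 0 := by
      intro y
      rw [show -((x : ℂ) * (y : ℂ)) = ((-(x * y) : ℝ) : ℂ) by push_cast; ring]
      simp only [Complex.sub_im, Complex.one_im, Complex.exp_ofReal_im, zero_sub, neg_zero]
    simp only [hz0] at this
    simp only [Complex.add_im, Complex.ofReal_im, Complex.mul_im, Complex.ofReal_re,
      Complex.ofReal_im]
    rw [← this]
    simp
  -- Re φ(x) ≤ Re φ(z)
  have hre_le : (φ ((x : ℂ))).re ≤ (φ z).re := by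
    rw [hφ (x : ℂ) hx', hφ z hz]
    simp only [Complex.add_re, Complex.ofReal_re, Complex.mul_re, Complex.ofReal_im,
      Complex.ofReal_re]
    rw [← hrez, ← hrex]
    have : d * x - 0 * ((x:ℂ)).im ≤ d * z.re - 0 * z.im := by
      simp [hxdef]
    linarith [hle]
  calc ‖φ ((x : ℂ))‖
      = |(φ ((x : ℂ))).re| := by
        rw [← Real.norm_eq_abs, ← Complex.norm_real]
        congr 1
        exact (Complex.ext (by simp) (by simp [him0])).symm
    _ = (φ ((x : ℂ))).re := abs_of_pos (hpos x hx)
    _ ≤ (φ z).re := hre_le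
    _ ≤ ‖φ z‖ := Complex.re_le_norm _
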